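/- arXiv:1107.1809 — 5 statements merged into one kernel-verified Lean document; each statement's English description precedes it below -/
import Mathlib

section
/- Let T : ℂ[z_1,…,z_n] → ℂ[[z_1,…,z_m]] be linear with symbol G_T(z,w) = ∑_α T(z^α) w^α/α!. If G_T(z,w) ∈ F_{β⊕γ}, then for every α ∈ (0,∞)^n with α_j ≤ 1/γ_j for all j, T defines a bounded operator T : F_α → F_β with ‖T(f)‖_β ≤ ‖G_T(z, αw)‖_{β⊕α} · ‖f‖_α. -/
open scoped BigOperators
open Complex

noncomputable section

def ffact {k : ℕ} (σ : Fin k →₀ ℕ) : ℝ := ∏ i, (Nat.factorial (σ i) : ℝ)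
def fwpow {k : ℕ} (β : Fin k → ℝ) (σ : Fin k →₀ ℕ) : ℝ := ∏ i, β i ^ σ i

lemma ffact_pos {k : ℕ} (σ : Fin k →₀ ℕ) : 0 < ffact σ :=
  Finset.prod_pos fun i _ => Nat.cast_pos.mpr (Nat.factorial_pos _)

lemma fwpow_pos {k : ℕ} {β : Fin k → ℝ} (hβ : ∀ i, 0 < β i) (σ : Fin k →₀ ℕ) :
    0 < fwpow β σ :=
  Finset.prod_pos fun i _ => pow_pos (hβ i) _

lemma my_summable_mul {ι : Type*} {f g : ι → ℝ} (hf0 : ∀ i, 0 ≤ f i) (hg0 : ∀ i, 0 ≤ g i)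
    (hf : Summable fun i => f i ^ 2) (hg : Summable fun i => g i ^ 2) :
    Summable fun i => f i * g i := by
  refine Summable.of_nonneg_of_le (fun i => mul_nonneg (hf0 i) (hg0 i))
    (fun i => ?_) (((hf.add hg).div_const 2))
  have := two_mul_le_add_sq (f i) (g i)
  nlinarith

lemma my_tsum_cs {ι : Type*} {f g : ι → ℝ} (hf0 : ∀ i, 0 ≤ f i) (hg0 : ∀ i, 0 ≤ g i)
    (hf : Summable fun i => f i ^ 2) (hg : Summable fun i => g i ^ 2) :
    ∑' i, f i * g i ≤ Real.sqrt (∑' i, f i ^ 2) * Real.sqrt (∑' i, g i ^ 2) := by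
  refine Summable.tsum_le_of_sum_le (my_summable_mul hf0 hg0 hf hg) fun s => ?_
  have h1 : (∑ i ∈ s, f i * g i) ^ 2 ≤ (∑ i ∈ s, f i ^ 2) * ∑ i ∈ s, g i ^ 2 :=
    Finset.sum_mul_sq_le_sq_mul_sq s f g
  have h2 : (∑ i ∈ s, f i ^ 2) ≤ ∑' i, f i ^ 2 :=
    Summable.sum_le_tsum s (fun i _ => sq_nonneg _) hf
  have h3 : (∑ i ∈ s, g i ^ 2) ≤ ∑' i, g i ^ 2 :=
    Summable.sum_le_tsum s (fun i _ => sq_nonneg _) hg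
  rw [← Real.sqrt_mul (tsum_nonneg fun _ => sq_nonneg _)]
  rw [Real.le_sqrt (Finset.sum_nonneg fun i _ => mul_nonneg (hf0 i) (hg0 i))
    (mul_nonneg (tsum_nonneg fun _ => sq_nonneg _) (tsum_nonneg fun _ => sq_nonneg _))]
  exact h1.trans (mul_le_mul h2 h3 (Finset.sum_nonneg fun i _ => sq_nonneg _)
    (tsum_nonneg fun _ => sq_nonneg _))

/-- Let `T : ℂ[z₁,…,zₙ] → ℂ[[z₁,…,z_m]]` be linear with symbol
`G_T(z,w) = ∑_η T(z^η) w^η/η!`.  If `G_T ∈ F_{β⊕γ}`, then for every `α` with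
`0 < α_j ≤ 1/γ_j`, `T` defines a bounded operator `F_α → F_β`:
for `f = ∑ a_η z^η ∈ F_α` the coefficientwise sums defining `T(f)` converge,
`T(f) ∈ F_β`, and `‖T(f)‖_β ≤ ‖G_T(z,αw)‖_{β⊕α} ‖f‖_α`. -/
theorem stmt_6 {n m : ℕ} (β : Fin m → ℝ) (γ : Fin n → ℝ)
    (hβ : ∀ i, 0 < β i) (hγ : ∀ i, 0 < γ i)
    (T : MvPolynomial (Fin n) ℂ →ₗ[ℂ] MvPowerSeries (Fin m) ℂ)
    (G : (Fin m →₀ ℕ) × (Fin n →₀ ℕ) → ℂ)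
    (hG : ∀ p, G p =
      MvPowerSeries.coeff p.1 (T (MvPolynomial.monomial p.2 1)) / (ffact p.2 : ℂ))
    (hGmem : Summable fun p : (Fin m →₀ ℕ) × (Fin n →₀ ℕ) =>
      (ffact p.1 * ffact p.2 / (fwpow β p.1 * fwpow γ p.2)) * ‖G p‖ ^ 2)
    (α : Fin n → ℝ) (hα : ∀ j, 0 < α j) (hαγ : ∀ j, α j ≤ (γ j)⁻¹)
    (a : (Fin n →₀ ℕ) → ℂ)
    (ha : Summable fun η => (ffact η / fwpow α η) * ‖a η‖ ^ 2) :
    (∀ κ : Fin m →₀ ℕ, Summable fun η =>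
      a η * MvPowerSeries.coeff κ (T (MvPolynomial.monomial η 1))) ∧
    Summable (fun κ => (ffact κ / fwpow β κ) *
      ‖∑' η, a η * MvPowerSeries.coeff κ (T (MvPolynomial.monomial η 1))‖ ^ 2) ∧
    Real.sqrt (∑' κ, (ffact κ / fwpow β κ) *
        ‖∑' η, a η * MvPowerSeries.coeff κ (T (MvPolynomial.monomial η 1))‖ ^ 2) ≤
      Real.sqrt (∑' p : (Fin m →₀ ℕ) × (Fin n →₀ ℕ),
          (ffact p.1 * ffact p.2 / (fwpow β p.1 * fwpow α p.2)) *
            ‖G p * (fwpow α p.2 : ℂ)‖ ^ 2) *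
        Real.sqrt (∑' η, (ffact η / fwpow α η) * ‖a η‖ ^ 2) := by
  classical
  set c : (Fin m →₀ ℕ) → (Fin n →₀ ℕ) → ℂ :=
    fun κ η => MvPowerSeries.coeff κ (T (MvPolynomial.monomial η 1)) with hc_def
  have hc : ∀ κ η, c κ η = G (κ, η) * (ffact η : ℂ) := by
    intro κ η
    have h := hG (κ, η)
    have hne : (ffact η : ℂ) ≠ 0 := by
      exact_mod_cast (ffact_pos η).ne'
    rw [h, div_mul_cancel₀ _ hne]
  -- real sequences
  set f : (Fin n →₀ ℕ) → ℝ := fun η => Real.sqrt (ffact η / fwpow α η) * ‖a η‖ with hf_def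
  set g : (Fin m →₀ ℕ) → (Fin n →₀ ℕ) → ℝ :=
    fun κ η => Real.sqrt (ffact η * fwpow α η) * ‖G (κ, η)‖ with hg_def
  have hαpos := fwpow_pos hα
  have hβpos := fwpow_pos hβ
  have hγpos := fwpow_pos hγ
  have hf0 : ∀ η, 0 ≤ f η := fun η => mul_nonneg (Real.sqrt_nonneg _) (norm_nonneg _)
  have hg0 : ∀ κ η, 0 ≤ g κ η := fun κ η => mul_nonneg (Real.sqrt_nonneg _) (norm_nonneg _)
  have hfsq : ∀ η, f η ^ 2 = (ffact η / fwpow α η) * ‖a η‖ ^ 2 := by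
    intro η
    rw [hf_def, mul_pow, Real.sq_sqrt (le_of_lt (div_pos (ffact_pos η) (hαpos η)))]
  have hgsq : ∀ κ η, g κ η ^ 2 = (ffact η * fwpow α η) * ‖G (κ, η)‖ ^ 2 := by
    intro κ η
    rw [hg_def, mul_pow, Real.sq_sqrt (le_of_lt (mul_pos (ffact_pos η) (hαpos η)))]
  have hfsum : Summable fun η => f η ^ 2 := by simpa only [hfsq] using ha
  -- H is the RHS double-sum term
  set H : (Fin m →₀ ℕ) × (Fin n →₀ ℕ) → ℝ :=
    fun p => (ffact p.1 / fwpow β p.1) * ((ffact p.2 * fwpow α p.2) * ‖G p‖ ^ 2) with hH_def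
  have hH0 : ∀ p, 0 ≤ H p := fun p =>
    mul_nonneg (le_of_lt (div_pos (ffact_pos _) (hβpos _)))
      (mul_nonneg (le_of_lt (mul_pos (ffact_pos _) (hαpos _))) (sq_nonneg _))
  have hαle : ∀ σ : Fin n →₀ ℕ, fwpow α σ ≤ (fwpow γ σ)⁻¹ := by
    intro σ
    have : fwpow α σ ≤ fwpow (fun j => (γ j)⁻¹) σ := by
      refine Finset.prod_le_prod (fun i _ => (pow_nonneg (hα i).le _)) fun i _ => ?_
      exact pow_le_pow_left₀ (hα i).le (hαγ i) _
    refine this.trans_eq ?_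
    rw [fwpow, fwpow, ← Finset.prod_inv_distrib]
    exact Finset.prod_congr rfl fun i _ => inv_pow _ _
  have hHsum : Summable H := by
    refine Summable.of_nonneg_of_le hH0 (fun p => ?_) hGmem
    have h1 : H p = (ffact p.1 * ffact p.2 / fwpow β p.1) * fwpow α p.2 * ‖G p‖ ^ 2 := by
      rw [hH_def]; ring
    have h2 : (ffact p.1 * ffact p.2 / (fwpow β p.1 * fwpow γ p.2)) * ‖G p‖ ^ 2
        = (ffact p.1 * ffact p.2 / fwpow β p.1) * (fwpow γ p.2)⁻¹ * ‖G p‖ ^ 2 := by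
      field_simp
    rw [h1, h2]
    have hco : (0:ℝ) ≤ ffact p.1 * ffact p.2 / fwpow β p.1 :=
      le_of_lt (div_pos (mul_pos (ffact_pos _) (ffact_pos _)) (hβpos _))
    exact mul_le_mul_of_nonneg_right
      (mul_le_mul_of_nonneg_left (hαle p.2) hco) (sq_nonneg _)
  have hHslice : ∀ κ, Summable fun η => H (κ, η) := fun κ => hHsum.prod_factor κ
  have hgsum : ∀ κ, Summable fun η => g κ η ^ 2 := by
    intro κ
    have hC : (ffact κ / fwpow β κ) ≠ 0 := (div_pos (ffact_pos κ) (hβpos κ)).ne'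
    have := (summable_mul_left_iff hC).mp (by simpa [hH_def] using hHslice κ)
    simpa only [hgsq] using this
  have heqnorm : ∀ κ η, ‖a η * c κ η‖ = f η * g κ η := by
    intro κ η
    rw [norm_mul, hc, norm_mul, Complex.norm_real, Real.norm_of_nonneg (ffact_pos η).le,
      hf_def, hg_def]
    have h2 : Real.sqrt (ffact η / fwpow α η) * Real.sqrt (ffact η * fwpow α η)
        = ffact η := by
      rw [← Real.sqrt_mul (le_of_lt (div_pos (ffact_pos η) (hαpos η)))]
      have h5 : ffact η / fwpow α η * (ffact η * fwpow α η) = ffact η ^ 2 := by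
        rw [mul_comm (ffact η) (fwpow α η), ← mul_assoc,
          div_mul_cancel₀ _ (hαpos η).ne', sq]
      rw [h5, Real.sqrt_sq (ffact_pos η).le]
    calc ‖a η‖ * (‖G (κ, η)‖ * ffact η)
        = (Real.sqrt (ffact η / fwpow α η) * Real.sqrt (ffact η * fwpow α η))
          * (‖a η‖ * ‖G (κ, η)‖) := by rw [h2]; ring
      _ = _ := by ring
  -- Part 1
  have part1 : ∀ κ, Summable fun η => a η * c κ η := by
    intro κ
    refine Summable.of_norm ?_
    simp only [heqnorm κ]
    exact my_summable_mul hf0 (hg0 κ) hfsum (hgsum κ)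
  -- key pointwise bound
  set A2 : ℝ := ∑' η, (ffact η / fwpow α η) * ‖a η‖ ^ 2 with hA2
  have hA20 : 0 ≤ A2 := tsum_nonneg fun η =>
    mul_nonneg (le_of_lt (div_pos (ffact_pos η) (hαpos η))) (sq_nonneg _)
  have hSbound : ∀ κ, ‖∑' η, a η * c κ η‖ ^ 2 ≤ A2 * ∑' η, g κ η ^ 2 := by
    intro κ
    have h1 : ‖∑' η, a η * c κ η‖ ≤ ∑' η, f η * g κ η := by
      have := norm_tsum_le_tsum_norm (f := fun η => a η * c κ η)
        (by simp only [heqnorm κ]; exact my_summable_mul hf0 (hg0 κ) hfsum (hgsum κ))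
      calc ‖∑' η, a η * c κ η‖ ≤ ∑' η, ‖a η * c κ η‖ := this
        _ = ∑' η, f η * g κ η := by simp only [heqnorm κ]
    have h2 : ∑' η, f η * g κ η
        ≤ Real.sqrt (∑' η, f η ^ 2) * Real.sqrt (∑' η, g κ η ^ 2) :=
      my_tsum_cs hf0 (hg0 κ) hfsum (hgsum κ)
    have h3 : ‖∑' η, a η * c κ η‖
        ≤ Real.sqrt A2 * Real.sqrt (∑' η, g κ η ^ 2) := by
      refine (h1.trans h2).trans_eq ?_
      congr 1
      rw [hA2]
      congr 1
      exact tsum_congr fun η => hfsq η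
    have h4 : (Real.sqrt A2 * Real.sqrt (∑' η, g κ η ^ 2)) ^ 2
        = A2 * ∑' η, g κ η ^ 2 := by
      rw [mul_pow, Real.sq_sqrt hA20,
        Real.sq_sqrt (tsum_nonneg fun η => sq_nonneg _)]
    calc ‖∑' η, a η * c κ η‖ ^ 2
        ≤ (Real.sqrt A2 * Real.sqrt (∑' η, g κ η ^ 2)) ^ 2 := by
          exact pow_le_pow_left₀ (norm_nonneg _) h3 2
      _ = A2 * ∑' η, g κ η ^ 2 := h4
  have hHslicesum : ∀ κ, (ffact κ / fwpow β κ) * ∑' η, g κ η ^ 2 = ∑' η, H (κ, η) := by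
    intro κ
    rw [← tsum_mul_left]
    exact tsum_congr fun η => by rw [hgsq, hH_def]
  have hHcolsum : Summable fun κ => ∑' η, H (κ, η) :=
    ((summable_prod_of_nonneg hH0).mp hHsum).2
  -- Part 2
  have part2 : Summable fun κ => (ffact κ / fwpow β κ) * ‖∑' η, a η * c κ η‖ ^ 2 := by
    refine Summable.of_nonneg_of_le
      (fun κ => mul_nonneg (le_of_lt (div_pos (ffact_pos κ) (hβpos κ))) (sq_nonneg _))
      (fun κ => ?_) (hHcolsum.mul_left A2)
    calc (ffact κ / fwpow β κ) * ‖∑' η, a η * c κ η‖ ^ 2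
        ≤ (ffact κ / fwpow β κ) * (A2 * ∑' η, g κ η ^ 2) :=
          mul_le_mul_of_nonneg_left (hSbound κ)
            (le_of_lt (div_pos (ffact_pos κ) (hβpos κ)))
      _ = A2 * ((ffact κ / fwpow β κ) * ∑' η, g κ η ^ 2) := by ring
      _ = A2 * ∑' η, H (κ, η) := by rw [hHslicesum]
  -- Part 3
  have hM2 : (∑' p : (Fin m →₀ ℕ) × (Fin n →₀ ℕ),
      (ffact p.1 * ffact p.2 / (fwpow β p.1 * fwpow α p.2)) *
        ‖G p * (fwpow α p.2 : ℂ)‖ ^ 2) = ∑' p, H p := by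
    refine tsum_congr fun p => ?_
    rw [norm_mul, Complex.norm_real, Real.norm_of_nonneg (hαpos p.2).le, mul_pow, hH_def]
    have hb := (hβpos p.1).ne'
    have hal := (hαpos p.2).ne'
    field_simp
  have hsum_le : (∑' κ, (ffact κ / fwpow β κ) * ‖∑' η, a η * c κ η‖ ^ 2)
      ≤ (∑' p, H p) * A2 := by
    have h1 : (∑' κ, (ffact κ / fwpow β κ) * ‖∑' η, a η * c κ η‖ ^ 2)
        ≤ ∑' κ, A2 * ∑' η, H (κ, η) := by
      refine Summable.tsum_le_tsum (fun κ => ?_) part2 (hHcolsum.mul_left A2)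
      calc (ffact κ / fwpow β κ) * ‖∑' η, a η * c κ η‖ ^ 2
          ≤ (ffact κ / fwpow β κ) * (A2 * ∑' η, g κ η ^ 2) :=
            mul_le_mul_of_nonneg_left (hSbound κ)
              (le_of_lt (div_pos (ffact_pos κ) (hβpos κ)))
        _ = A2 * ((ffact κ / fwpow β κ) * ∑' η, g κ η ^ 2) := by ring
        _ = A2 * ∑' η, H (κ, η) := by rw [hHslicesum]
    have h2 : (∑' κ, A2 * ∑' η, H (κ, η)) = A2 * ∑' κ, ∑' η, H (κ, η) := tsum_mul_left
    have h3 : (∑' κ, ∑' η, H (κ, η)) = ∑' p, H p := (Summable.tsum_prod' hHsum hHslice).symm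
    rw [h2, h3] at h1
    linarith [h1]
  refine ⟨part1, part2, ?_⟩
  have hsq := Real.sqrt_le_sqrt hsum_le
  refine hsq.trans ?_
  rw [Real.sqrt_mul (tsum_nonneg hH0), hM2]
end
end

section
/- If T : F_α → F_β is a bounded linear operator, then its symbol satisfies G_T(z,w) ∈ F_{β⊕γ} for every γ ∈ (0,∞)^n with γ_j > 1/α_j for all j; more precisely ‖G_T(z, α w)‖²_{β⊕α'} ≤ ‖T‖² ∏_{j=1}^n α'_j/(α'_j − α_j) for every α' ≫ α. -/
open scoped BigOperators ENNReal
open Complex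

noncomputable section

def mfact {n : ℕ} (α : Fin n → ℕ) : ℝ := ∏ i, (Nat.factorial (α i) : ℝ)
def wpow {n : ℕ} (β : Fin n → ℝ) (α : Fin n → ℕ) : ℝ := ∏ i, β i ^ α i

/-- The weighted Bargmann–Fock space `F_β` modelled as `ℓ²` over multi-indices,
an element `u` representing the entire function `∑_α u_α √(β^α/α!) z^α`. -/
abbrev Fock (n : ℕ) : Type := lp (fun _ : (Fin n → ℕ) => ℂ) 2

/-- The monomial `z^η` as an element of `F_α`: its normalized coordinate vector. -/
def monElt {n : ℕ} (α : Fin n → ℝ) (η : Fin n → ℕ) : Fock n :=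
  (Real.sqrt (mfact η / wpow α η) : ℂ) • lp.single 2 η (1 : ℂ)

/-- The Taylor coefficient at `z^κ ⊗ w^η` of the symbol `G_T(z,w) = ∑_η T(z^η) w^η/η!`
of a bounded operator `T : F_α → F_β`. -/
def symbCoeff {n m : ℕ} (α : Fin n → ℝ) (β : Fin m → ℝ)
    (T : Fock n →L[ℂ] Fock m) (p : (Fin m → ℕ) × (Fin n → ℕ)) : ℂ :=
  (Real.sqrt (wpow β p.1 / mfact p.1) : ℂ) * (T (monElt α p.2) : ∀ _, ℂ) p.1 /
    (mfact p.2 : ℂ)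

lemma mfact_pos {n : ℕ} (η : Fin n → ℕ) : 0 < mfact η :=
  Finset.prod_pos fun i _ => by exact_mod_cast (Nat.factorial_pos (η i))

lemma wpow_pos {n : ℕ} {β : Fin n → ℝ} (hβ : ∀ i, 0 < β i) (η : Fin n → ℕ) :
    0 < wpow β η :=
  Finset.prod_pos fun i _ => pow_pos (hβ i) _

lemma hasSum_pi_prod (n : ℕ) : ∀ (f : Fin n → ℕ → ℝ) (s : Fin n → ℝ),
    (∀ i k, 0 ≤ f i k) → (∀ i, HasSum (f i) (s i)) →
    HasSum (fun η : Fin n → ℕ => ∏ i, f i (η i)) (∏ i, s i) := by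
  induction n with
  | zero =>
    intro f s _ _
    have h : HasSum (fun _ : (Fin 0 → ℕ) => (1 : ℝ)) 1 :=
      hasSum_single (f := fun _ : (Fin 0 → ℕ) => (1 : ℝ)) default
        (fun b hb => absurd (Subsingleton.elim b default) hb)
    simpa using h
  | succ n IH =>
    intro f s h0 hs
    have ih : HasSum (fun η : Fin n → ℕ => ∏ i : Fin n, f (Fin.succ i) (η i))
        (∏ i : Fin n, s (Fin.succ i)) :=
      IH (fun i => f (Fin.succ i)) (fun i => s (Fin.succ i))
        (fun i k => h0 _ k) (fun i => hs (Fin.succ i))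
    have h1 : (0:ℕ → ℝ) ≤ f 0 := fun k => h0 0 k
    have h2 : (0:(Fin n → ℕ) → ℝ) ≤ fun η : Fin n → ℕ => ∏ i : Fin n, f (Fin.succ i) (η i) :=
      fun η => Finset.prod_nonneg fun i _ => h0 _ _
    have hsumm := (hs 0).summable.mul_of_nonneg ih.summable h1 h2
    have hmul := (hs 0).mul ih hsumm
    rw [← (Fin.consEquiv (fun _ : Fin (n + 1) => ℕ)).hasSum_iff]
    have heq : ((fun η : Fin (n+1) → ℕ => ∏ i, f i (η i)) ∘
          (Fin.consEquiv (fun _ : Fin (n + 1) => ℕ))) =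
        fun p : ℕ × (Fin n → ℕ) => f 0 p.1 * ∏ i : Fin n, f (Fin.succ i) (p.2 i) := by
      funext p
      simp [Fin.consEquiv, Fin.prod_univ_succ]
    rw [heq, Fin.prod_univ_succ]
    exact hmul

lemma norm_monElt_sq {n : ℕ} {α : Fin n → ℝ} (hα : ∀ j, 0 < α j) (η : Fin n → ℕ) :
    ‖monElt α η‖ ^ 2 = mfact η / wpow α η := by
  have h1 : ‖lp.single (E := fun _ : (Fin n → ℕ) => ℂ) 2 η (1 : ℂ)‖ = 1 := by
    have := lp.norm_single (E := fun _ : (Fin n → ℕ) => ℂ) (p := 2) (by norm_num)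
      η (1 : ℂ)
    simpa using this
  have hnn : (0:ℝ) ≤ mfact η / wpow α η :=
    le_of_lt (div_pos (mfact_pos η) (wpow_pos hα η))
  rw [monElt, norm_smul, h1, mul_one]
  rw [Complex.norm_real, Real.norm_eq_abs, _root_.abs_of_nonneg (Real.sqrt_nonneg _),
    Real.sq_sqrt hnn]

set_option maxHeartbeats 2000000 in
lemma core {n m : ℕ} (α : Fin n → ℝ) (hα : ∀ j, 0 < α j) (T : Fock n →L[ℂ] Fock m)
    (r : Fin n → ℝ) (hr0 : ∀ j, 0 ≤ r j) (hr1 : ∀ j, r j < 1)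
    (c : (Fin n → ℕ) → ℝ) (hc : ∀ η, 0 ≤ c η)
    (hcr : ∀ η, c η * (mfact η / wpow α η) = ∏ j, r j ^ η j) :
    Summable (fun p : (Fin m → ℕ) × (Fin n → ℕ) =>
      c p.2 * ‖(T (monElt α p.2) : ∀ _, ℂ) p.1‖ ^ 2) ∧
    ∑' p : (Fin m → ℕ) × (Fin n → ℕ),
        c p.2 * ‖(T (monElt α p.2) : ∀ _, ℂ) p.1‖ ^ 2 ≤
      ‖T‖ ^ 2 * ∏ j, (1 - r j)⁻¹ := by
  set u : (Fin n → ℕ) → Fock m := fun η => T (monElt α η) with hu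
  -- summability in κ for fixed η
  have hsumκ : ∀ η, Summable fun κ => ‖(u η : ∀ _, ℂ) κ‖ ^ 2 := by
    intro η
    have h := (lp.memℓp (u η)).summable (p := 2) (by norm_num)
    simp only [ENNReal.toReal_ofNat, Real.rpow_two] at h
    exact h
  have htsumκ : ∀ η, ∑' κ, ‖(u η : ∀ _, ℂ) κ‖ ^ 2 = ‖u η‖ ^ 2 := by
    intro η
    have h := lp.norm_rpow_eq_tsum (p := 2) (by norm_num) (u η)
    simp only [ENNReal.toReal_ofNat, Real.rpow_two] at h
    exact h.symm
  have hbound : ∀ η, c η * ‖u η‖ ^ 2 ≤ ‖T‖ ^ 2 * ∏ j, r j ^ η j := by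
    intro η
    have h1 : ‖u η‖ ^ 2 ≤ ‖T‖ ^ 2 * ‖monElt α η‖ ^ 2 := by
      rw [← mul_pow]
      exact pow_le_pow_left₀ (norm_nonneg _) (T.le_opNorm _) 2
    calc c η * ‖u η‖ ^ 2 ≤ c η * (‖T‖ ^ 2 * ‖monElt α η‖ ^ 2) :=
          mul_le_mul_of_nonneg_left h1 (hc η)
      _ = ‖T‖ ^ 2 * (c η * (mfact η / wpow α η)) := by
          rw [norm_monElt_sq hα]; ring
      _ = ‖T‖ ^ 2 * ∏ j, r j ^ η j := by rw [hcr]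
  have hG : HasSum (fun η : Fin n → ℕ => ∏ j, r j ^ η j) (∏ j, (1 - r j)⁻¹) :=
    hasSum_pi_prod n (fun j k => r j ^ k) (fun j => (1 - r j)⁻¹)
      (fun j k => pow_nonneg (hr0 j) k)
      (fun j => hasSum_geometric_of_lt_one (hr0 j) (hr1 j))
  -- the swapped function
  set G : (Fin n → ℕ) × (Fin m → ℕ) → ℝ :=
    fun q => c q.1 * ‖(u q.1 : ∀ _, ℂ) q.2‖ ^ 2 with hG'
  have hGnn : 0 ≤ G := fun q => mul_nonneg (hc _) (by positivity)
  have hinner : ∀ η, Summable fun κ => G (η, κ) := fun η => by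
    simpa [hG'] using (hsumκ η).mul_left (c η)
  have hinner_tsum : ∀ η, ∑' κ, G (η, κ) = c η * ‖u η‖ ^ 2 := by
    intro η
    rw [hG']
    simp only
    rw [tsum_mul_left, htsumκ]
  have houter_le : ∀ η, ∑' κ, G (η, κ) ≤ ‖T‖ ^ 2 * ∏ j, r j ^ η j := by
    intro η; rw [hinner_tsum]; exact hbound η
  have hbsumm : Summable fun η : Fin n → ℕ => ‖T‖ ^ 2 * ∏ j, r j ^ η j :=
    hG.summable.mul_left _
  have houter : Summable fun η => ∑' κ, G (η, κ) :=
    Summable.of_nonneg_of_le (fun η => tsum_nonneg fun κ => hGnn _) houter_le hbsumm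
  have hGsumm : Summable G :=
    (summable_prod_of_nonneg hGnn).2 ⟨hinner, houter⟩
  have hFsumm : Summable (fun p : (Fin m → ℕ) × (Fin n → ℕ) =>
      c p.2 * ‖(u p.2 : ∀ _, ℂ) p.1‖ ^ 2) := by
    have := hGsumm.prod_symm
    simpa [G] using this
  refine ⟨hFsumm, ?_⟩
  have heq : ∑' p : (Fin m → ℕ) × (Fin n → ℕ),
      c p.2 * ‖(u p.2 : ∀ _, ℂ) p.1‖ ^ 2 = ∑' q, G q := by
    rw [← (Equiv.prodComm (Fin m → ℕ) (Fin n → ℕ)).tsum_eq G]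
    rfl
  rw [heq, Summable.tsum_prod hGsumm]
  calc ∑' η, ∑' κ, G (η, κ) ≤ ∑' η : Fin n → ℕ, ‖T‖ ^ 2 * ∏ j, r j ^ η j :=
        Summable.tsum_le_tsum houter_le houter hbsumm
    _ = ‖T‖ ^ 2 * ∏ j, (1 - r j)⁻¹ := by rw [tsum_mul_left, hG.tsum_eq]

/-- If `T : F_α → F_β` is bounded, then `G_T(z,w) ∈ F_{β⊕γ}` for all `γ ≫ α⁻¹`;
more precisely `‖G_T(z,αw)‖²_{β⊕α'} ≤ ‖T‖² ∏ α'_j/(α'_j-α_j)` for all `α' ≫ α`. -/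
theorem stmt_8 {n m : ℕ} (α : Fin n → ℝ) (β : Fin m → ℝ)
    (hα : ∀ j, 0 < α j) (hβ : ∀ i, 0 < β i)
    (T : Fock n →L[ℂ] Fock m) :
    (∀ γ : Fin n → ℝ, (∀ j, (α j)⁻¹ < γ j) →
      Summable fun p : (Fin m → ℕ) × (Fin n → ℕ) =>
        (mfact p.1 * mfact p.2 / (wpow β p.1 * wpow γ p.2)) *
          ‖symbCoeff α β T p‖ ^ 2) ∧
    (∀ α' : Fin n → ℝ, (∀ j, α j < α' j) →
      ∑' p : (Fin m → ℕ) × (Fin n → ℕ),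
          (mfact p.1 * mfact p.2 / (wpow β p.1 * wpow α' p.2)) *
            ‖symbCoeff α β T p * (wpow α p.2 : ℂ)‖ ^ 2 ≤
        ‖T‖ ^ 2 * ∏ j, α' j / (α' j - α j)) := by
  -- norm of symbCoeff squared
  have hsc : ∀ p : (Fin m → ℕ) × (Fin n → ℕ),
      ‖symbCoeff α β T p‖ ^ 2 =
        (wpow β p.1 / mfact p.1) * ‖(T (monElt α p.2) : ∀ _, ℂ) p.1‖ ^ 2 /
          (mfact p.2) ^ 2 := by
    intro p
    have hnn : (0:ℝ) ≤ wpow β p.1 / mfact p.1 :=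
      le_of_lt (div_pos (wpow_pos hβ p.1) (mfact_pos p.1))
    rw [symbCoeff, norm_div, norm_mul, Complex.norm_real, Real.norm_eq_abs,
      _root_.abs_of_nonneg (Real.sqrt_nonneg _), Complex.norm_real, Real.norm_eq_abs,
      _root_.abs_of_nonneg (le_of_lt (mfact_pos p.2)), div_pow, mul_pow, Real.sq_sqrt hnn]
  constructor
  · intro γ hγ
    have hγpos : ∀ j, 0 < γ j := fun j => lt_trans (inv_pos.2 (hα j)) (hγ j)
    have hcore := core α hα T (fun j => (α j * γ j)⁻¹)
      (fun j => le_of_lt (inv_pos.2 (mul_pos (hα j) (hγpos j))))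
      (fun j => by
        have h1 : 1 < α j * γ j := by
          have h := mul_lt_mul_of_pos_left (hγ j) (hα j)
          rwa [mul_inv_cancel₀ (ne_of_gt (hα j))] at h
        first
          | exact inv_lt_one h1
          | exact inv_lt_one_of_one_lt₀ h1)
      (fun η => (wpow γ η * mfact η)⁻¹)
      (fun η => le_of_lt (inv_pos.2 (mul_pos (wpow_pos hγpos η) (mfact_pos η))))
      (fun η => by
        have h1 : ∏ j, ((α j * γ j)⁻¹) ^ η j = (wpow α η * wpow γ η)⁻¹ := by
          rw [wpow, wpow, ← Finset.prod_mul_distrib, ← Finset.prod_inv_distrib]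
          exact Finset.prod_congr rfl fun j _ => by rw [← mul_pow, ← inv_pow]
        rw [h1]
        have := mfact_pos η
        have := wpow_pos hγpos η
        have := wpow_pos hα η
        field_simp)
    refine (summable_congr ?_).2 hcore.1
    intro p
    rw [hsc p]
    have h1 := mfact_pos p.1
    have h2 := mfact_pos p.2
    have h3 := wpow_pos hβ p.1
    have h4 := wpow_pos hγpos p.2
    field_simp
  · intro α' hα'
    have hα'pos : ∀ j, 0 < α' j := fun j => lt_trans (hα j) (hα' j)
    have hcore := core α hα T (fun j => α j / α' j)
      (fun j => le_of_lt (div_pos (hα j) (hα'pos j)))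
      (fun j => (div_lt_one (hα'pos j)).2 (hα' j))
      (fun η => (wpow α η) ^ 2 / (wpow α' η * mfact η))
      (fun η => le_of_lt (div_pos (pow_pos (wpow_pos hα η) 2)
        (mul_pos (wpow_pos hα'pos η) (mfact_pos η))))
      (fun η => by
        have h1 : ∏ j, (α j / α' j) ^ η j = wpow α η / wpow α' η := by
          rw [wpow, wpow, ← Finset.prod_div_distrib]
          exact Finset.prod_congr rfl fun j _ => by rw [div_pow]
        rw [h1]
        have := mfact_pos η
        have := wpow_pos hα'pos η
        have := wpow_pos hα η
        field_simp)
    have hfinal : (∏ j, (1 - α j / α' j)⁻¹) = ∏ j, α' j / (α' j - α j) := by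
      refine Finset.prod_congr rfl fun j _ => ?_
      have : 1 - α j / α' j = (α' j - α j) / α' j := by
        rw [sub_div, div_self (ne_of_gt (hα'pos j))]
      rw [this, inv_div]
    have heq : ∀ p : (Fin m → ℕ) × (Fin n → ℕ),
        (mfact p.1 * mfact p.2 / (wpow β p.1 * wpow α' p.2)) *
            ‖symbCoeff α β T p * (wpow α p.2 : ℂ)‖ ^ 2 =
          (wpow α p.2) ^ 2 / (wpow α' p.2 * mfact p.2) *
            ‖(T (monElt α p.2) : ∀ _, ℂ) p.1‖ ^ 2 := by
      intro p
      rw [norm_mul, Complex.norm_real, Real.norm_eq_abs,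
        _root_.abs_of_nonneg (le_of_lt (wpow_pos hα p.2)), mul_pow, hsc p]
      have h1 := mfact_pos p.1
      have h2 := mfact_pos p.2
      have h3 := wpow_pos hβ p.1
      have h4 := wpow_pos hα'pos p.2
      field_simp
    calc ∑' p : (Fin m → ℕ) × (Fin n → ℕ),
          (mfact p.1 * mfact p.2 / (wpow β p.1 * wpow α' p.2)) *
            ‖symbCoeff α β T p * (wpow α p.2 : ℂ)‖ ^ 2
        = ∑' p : (Fin m → ℕ) × (Fin n → ℕ),
            (wpow α p.2) ^ 2 / (wpow α' p.2 * mfact p.2) *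
              ‖(T (monElt α p.2) : ∀ _, ℂ) p.1‖ ^ 2 := tsum_congr heq
      _ ≤ ‖T‖ ^ 2 * ∏ j, (1 - α j / α' j)⁻¹ := hcore.2
      _ = ‖T‖ ^ 2 * ∏ j, α' j / (α' j - α j) := by rw [hfinal]
end
end

section
/- Let μ = (δ_a + δ_b)/2 with a, b ∈ ℂ. Its Fourier–Laplace transform satisfies μ̂(z) = exp(((a+b)/2) z) · cosh(((a−b)/2) z). Moreover, μ̂ is nonvanishing on the open right half-plane {Re z > 0} and is a locally uniform limit of polynomials nonvanishing on the open right half-plane if and only if a − b ∈ ℝ and Re(a+b) ≥ 0. -/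
open Complex Filter

noncomputable section

/-- The Lee–Yang class `LY₁(ℂ)`: locally uniform limits of polynomials
nonvanishing on the open right half-plane. -/
def InLY (f : ℂ → ℂ) : Prop :=
  ∃ P : ℕ → Polynomial ℂ,
    (∀ k : ℕ, ∀ z : ℂ, 0 < z.re → (P k).eval z ≠ 0) ∧
    TendstoLocallyUniformly (fun k : ℕ => fun z : ℂ => (P k).eval z) f atTop

open Polynomial

def Complex.abs : AbsoluteValue ℂ ℝ := NormedField.toAbsoluteValue ℂ

lemma Complex.abs_apply (z : ℂ) : Complex.abs z = Real.sqrt (Complex.normSq z) := Complex.norm_def z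

@[simp] lemma Complex.abs_natCast (n : ℕ) : Complex.abs (n : ℂ) = n := Complex.norm_natCast n

@[simp] lemma Complex.abs_ofNat (n : ℕ) [n.AtLeastTwo] : Complex.abs (OfNat.ofNat n : ℂ) = OfNat.ofNat n :=
  Complex.norm_ofNat n

@[simp] lemma Complex.abs_exp (z : ℂ) : Complex.abs (Complex.exp z) = Real.exp z.re := Complex.norm_exp z

@[simp] lemma Complex.abs_two : Complex.abs 2 = 2 := by
  show ‖(2:ℂ)‖ = 2
  norm_num

lemma Complex.continuous_abs : Continuous Complex.abs := continuous_norm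

lemma Complex.abs_exp_sub_one_sub_id_le {x : ℂ} (hx : Complex.abs x ≤ 1) :
    Complex.abs (Complex.exp x - 1 - x) ≤ Complex.abs x ^ 2 := Complex.norm_exp_sub_one_sub_id_le hx

lemma Complex.sq_abs (z : ℂ) : Complex.abs z ^ 2 = Complex.normSq z := Complex.sq_norm z

lemma Complex.re_le_abs (z : ℂ) : z.re ≤ Complex.abs z := Complex.re_le_norm z

lemma aux_root (ρ : ℂ) (h : ρ.re ≤ 0) : Complex.abs (-1 - ρ) ≤ Complex.abs (1 - ρ) := by
  rw [Complex.abs_apply, Complex.abs_apply]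
  apply Real.sqrt_le_sqrt
  simp only [Complex.normSq_apply, Complex.sub_re, Complex.sub_im, Complex.neg_re,
    Complex.neg_im, Complex.one_re, Complex.one_im]
  nlinarith

lemma aux_ms (s : Multiset ℂ) (h : ∀ ρ ∈ s, ρ.re ≤ 0) :
    (s.map (fun ρ => Complex.abs (-1 - ρ))).prod ≤ (s.map (fun ρ => Complex.abs (1 - ρ))).prod := by
  induction s using Multiset.induction with
  | empty => simp
  | cons ρ s ih =>
    simp only [Multiset.map_cons, Multiset.prod_cons]
    have h1 : ρ.re ≤ 0 := h ρ (by simp)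
    have h2 := ih (fun x hx => h x (by simp [hx]))
    have h3 : (0:ℝ) ≤ (s.map (fun ρ => Complex.abs (-1 - ρ))).prod := by
      apply Multiset.prod_nonneg; intro x hx
      simp only [Multiset.mem_map] at hx
      obtain ⟨y, _, rfl⟩ := hx
      exact Complex.abs.nonneg _
    exact mul_le_mul (aux_root ρ h1) h2 h3 (Complex.abs.nonneg _)

lemma aux_poly (P : Polynomial ℂ) (hP : ∀ z : ℂ, 0 < z.re → P.eval z ≠ 0) :
    Complex.abs (P.eval (-1)) ≤ Complex.abs (P.eval 1) := by
  by_cases h0 : P = 0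
  · simp [h0]
  have hfac := (IsAlgClosed.splits P).eq_prod_roots
  have key : ∀ z : ℂ, Complex.abs (P.eval z)
      = Complex.abs P.leadingCoeff * (P.roots.map (fun ρ => Complex.abs (z - ρ))).prod := by
    intro z
    conv_lhs => rw [hfac]
    rw [eval_mul, eval_C, map_mul, eval_multiset_prod, Multiset.map_map]
    rw [map_multiset_prod Complex.abs, Multiset.map_map]
    simp [Function.comp]
  rw [key, key]
  apply mul_le_mul_of_nonneg_left _ (Complex.abs.nonneg _)
  apply aux_ms
  intro ρ hρ
  by_contra hc
  exact hP ρ (lt_of_not_ge hc) ((Polynomial.isRoot_of_mem_roots hρ))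


lemma aux_est (z : ℂ) (n : ℕ) (hn : 1 ≤ n) (hzn : Complex.abs z ≤ n) :
    Complex.abs ((1 + z / n) ^ n - Complex.exp z)
      ≤ Complex.abs z ^ 2 * Real.exp (Complex.abs z) / n := by
  have hn0 : (n:ℂ) ≠ 0 := Nat.cast_ne_zero.2 (by omega)
  have hn0' : (0:ℝ) < n := by exact_mod_cast Nat.pos_of_ne_zero (by omega)
  set x : ℂ := 1 + z / n with hx
  set y : ℂ := Complex.exp (z / n) with hy
  have hey : y ^ n = Complex.exp z := by
    rw [hy, ← Complex.exp_nat_mul]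
    congr 1
    field_simp
  have hid : x ^ n - y ^ n = (∑ i ∈ Finset.range n, x ^ i * y ^ (n - 1 - i)) * (x - y) :=
    (geom_sum₂_mul x y n).symm
  have habs_zn : Complex.abs (z / n) ≤ 1 := by
    rw [map_div₀]
    simp only [Complex.abs_natCast]
    rw [div_le_one hn0']
    exact hzn
  have hxy : Complex.abs (x - y) ≤ (Complex.abs z / n) ^ 2 := by
    have h1 := Complex.abs_exp_sub_one_sub_id_le habs_zn
    have h2 : x - y = -(Complex.exp (z/n) - 1 - z/n) := by rw [hx, hy]; ring
    rw [h2, map_neg_eq_map]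
    calc Complex.abs (Complex.exp (z/n) - 1 - z/n) ≤ Complex.abs (z/n) ^ 2 := h1
      _ = (Complex.abs z / n) ^ 2 := by rw [map_div₀]; simp
  have hxb : Complex.abs x ≤ Real.exp (Complex.abs z / n) := by
    have h3 := Real.add_one_le_exp (Complex.abs z / n)
    calc Complex.abs x ≤ Complex.abs 1 + Complex.abs (z / n) := Complex.abs.add_le _ _
      _ = 1 + Complex.abs z / n := by rw [map_one, map_div₀]; simp
      _ ≤ Real.exp (Complex.abs z / n) := by linarith
  have hyb : Complex.abs y ≤ Real.exp (Complex.abs z / n) := by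
    rw [hy, Complex.abs_exp]
    apply Real.exp_le_exp.2
    calc (z/n).re ≤ Complex.abs (z/n) := Complex.re_le_abs _
      _ = Complex.abs z / n := by rw [map_div₀]; simp
  have hterm : ∀ i ∈ Finset.range n,
      Complex.abs (x ^ i * y ^ (n - 1 - i)) ≤ Real.exp (Complex.abs z) := by
    intro i hi
    simp only [Finset.mem_range] at hi
    have hE1 : (0:ℝ) ≤ Real.exp (Complex.abs z / n) := (Real.exp_pos _).le
    have h1 : Complex.abs (x ^ i * y ^ (n - 1 - i))
        ≤ Real.exp (Complex.abs z / n) ^ (i + (n - 1 - i)) := by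
      rw [map_mul, map_pow, map_pow, pow_add]
      exact mul_le_mul (pow_le_pow_left₀ (Complex.abs.nonneg _) hxb i)
        (pow_le_pow_left₀ (Complex.abs.nonneg _) hyb _) (by positivity) (by positivity)
    have h2 : i + (n - 1 - i) ≤ n := by omega
    have h3 : Real.exp (Complex.abs z / n) ^ (i + (n - 1 - i))
        ≤ Real.exp (Complex.abs z / n) ^ n := by
      apply pow_le_pow_right₀ _ h2
      have := Real.add_one_le_exp (Complex.abs z / n)
      have : 0 ≤ Complex.abs z / n := by positivity
      linarith [Real.add_one_le_exp (Complex.abs z / n)]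
    have h4 : Real.exp (Complex.abs z / n) ^ n = Real.exp (Complex.abs z) := by
      rw [← Real.exp_nat_mul]
      congr 1
      field_simp
    linarith
  have hsum : Complex.abs (∑ i ∈ Finset.range n, x ^ i * y ^ (n - 1 - i))
      ≤ n * Real.exp (Complex.abs z) := by
    calc Complex.abs (∑ i ∈ Finset.range n, x ^ i * y ^ (n - 1 - i))
        ≤ ∑ i ∈ Finset.range n, Complex.abs (x ^ i * y ^ (n - 1 - i)) :=
          Complex.abs.sum_le _ _
      _ ≤ ∑ i ∈ Finset.range n, Real.exp (Complex.abs z) := Finset.sum_le_sum hterm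
      _ = n * Real.exp (Complex.abs z) := by simp [Finset.sum_const, mul_comm]
  calc Complex.abs ((1 + z / n) ^ n - Complex.exp z)
      = Complex.abs (∑ i ∈ Finset.range n, x ^ i * y ^ (n - 1 - i)) * Complex.abs (x - y) := by
        rw [← hey, hid, map_mul]
    _ ≤ (n * Real.exp (Complex.abs z)) * ((Complex.abs z / n) ^ 2) :=
        mul_le_mul hsum hxy (Complex.abs.nonneg _) (by positivity)
    _ = Complex.abs z ^ 2 * Real.exp (Complex.abs z) / n * (n / n) := by
        field_simp
    _ = Complex.abs z ^ 2 * Real.exp (Complex.abs z) / n := by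
        rw [div_self (ne_of_gt hn0'), mul_one]

lemma aux_tuo (w : ℂ) (R : ℝ) :
    TendstoUniformlyOn (fun (k : ℕ) (z : ℂ) => (1 + w * z / (k + 1 : ℕ)) ^ (k + 1 : ℕ))
      (fun z => Complex.exp (w * z)) atTop (Metric.closedBall 0 R) := by
  rw [Metric.tendstoUniformlyOn_iff]
  intro ε hε
  set M : ℝ := Complex.abs w * max R 0 with hM
  have hM0 : 0 ≤ M := by positivity
  have hlim : Tendsto (fun k : ℕ => M ^ 2 * Real.exp M / (k + 1 : ℕ)) atTop (nhds 0) := by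
    exact (tendsto_const_div_atTop_nhds_zero_nat (M ^ 2 * Real.exp M)).comp
      (tendsto_add_atTop_nat 1)
  have h1 : ∀ᶠ k : ℕ in atTop, M ^ 2 * Real.exp M / (k + 1 : ℕ) < ε :=
    hlim.eventually (eventually_lt_nhds hε)
  have h2 : ∀ᶠ k : ℕ in atTop, M ≤ (k + 1 : ℕ) := by
    filter_upwards [eventually_ge_atTop ⌈M⌉₊] with k hk
    calc M ≤ ⌈M⌉₊ := Nat.le_ceil M
      _ ≤ (k : ℝ) := by exact_mod_cast hk
      _ ≤ (k + 1 : ℕ) := by push_cast; linarith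
  filter_upwards [h1, h2] with k hk1 hk2
  intro z hz
  have hzb : Complex.abs (w * z) ≤ M := by
    rw [map_mul, hM]
    apply mul_le_mul_of_nonneg_left _ (Complex.abs.nonneg w)
    rw [Metric.mem_closedBall, Complex.dist_eq, sub_zero] at hz
    exact le_max_of_le_left hz
  have := aux_est (w * z) (k + 1) (by omega) (hzb.trans hk2)
  have hmono : Complex.abs (w*z) ^ 2 * Real.exp (Complex.abs (w*z)) / ((k+1:ℕ):ℝ)
      ≤ M ^ 2 * Real.exp M / ((k+1:ℕ):ℝ) := by
    apply div_le_div_of_nonneg_right ?_ (by positivity)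
    exact mul_le_mul (by nlinarith [Complex.abs.nonneg (w*z)])
      (Real.exp_le_exp.2 hzb) (Real.exp_pos _).le (by positivity)
  rw [Complex.dist_eq]
  exact lt_of_le_of_lt (le_trans (le_of_eq (Complex.abs.map_sub _ _)) (this.trans hmono)) hk1

lemma aux_tuo2 (a b : ℂ) (R : ℝ) :
    TendstoUniformlyOn
      (fun (k : ℕ) (z : ℂ) =>
        ((1 + a * z / (k + 1 : ℕ)) ^ (k + 1 : ℕ) + (1 + b * z / (k + 1 : ℕ)) ^ (k + 1 : ℕ)) / 2)
      (fun z => (Complex.exp (a * z) + Complex.exp (b * z)) / 2) atTop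
      (Metric.closedBall 0 R) := by
  rw [Metric.tendstoUniformlyOn_iff]
  intro ε hε
  have ha := Metric.tendstoUniformlyOn_iff.1 (aux_tuo a R) ε hε
  have hb := Metric.tendstoUniformlyOn_iff.1 (aux_tuo b R) ε hε
  filter_upwards [ha, hb] with k hka hkb
  intro z hz
  have h1 := hka z hz
  have h2 := hkb z hz
  rw [Complex.dist_eq] at h1 h2 ⊢
  have key : Complex.exp (a*z) + Complex.exp (b*z) -
      ((1 + a * z / (k + 1 : ℕ)) ^ (k + 1 : ℕ) + (1 + b * z / (k + 1 : ℕ)) ^ (k + 1 : ℕ))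
      = (Complex.exp (a*z) - (1 + a * z / (k + 1 : ℕ)) ^ (k + 1 : ℕ)) +
        (Complex.exp (b*z) - (1 + b * z / (k + 1 : ℕ)) ^ (k + 1 : ℕ)) := by ring
  calc Complex.abs ((Complex.exp (a*z) + Complex.exp (b*z)) / 2 -
        ((1 + a * z / (k + 1 : ℕ)) ^ (k + 1 : ℕ) + (1 + b * z / (k + 1 : ℕ)) ^ (k + 1 : ℕ)) / 2)
      = Complex.abs (Complex.exp (a*z) + Complex.exp (b*z) -
        ((1 + a * z / (k + 1 : ℕ)) ^ (k + 1 : ℕ) + (1 + b * z / (k + 1 : ℕ)) ^ (k + 1 : ℕ))) / 2 := by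
        rw [div_sub_div_same, map_div₀]; simp
    _ ≤ (Complex.abs (Complex.exp (a*z) - (1 + a * z / (k + 1 : ℕ)) ^ (k + 1 : ℕ)) +
         Complex.abs (Complex.exp (b*z) - (1 + b * z / (k + 1 : ℕ)) ^ (k + 1 : ℕ))) / 2 := by
        rw [key]
        apply div_le_div_of_nonneg_right ?_ (by norm_num)
        exact Complex.abs.add_le _ _
    _ < (ε + ε) / 2 := by
        have h1' : Complex.abs _ < ε := h1
        have h2' : Complex.abs _ < ε := h2
        linarith
    _ = ε := by ring


lemma aux_polynz (a b : ℂ) (hIm : (a - b).im = 0) (hRe : 0 ≤ (a + b).re) (k : ℕ) (z : ℂ)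
    (hz : 0 < z.re) :
    ((1 + a * z / (k + 1 : ℕ)) ^ (k + 1 : ℕ) + (1 + b * z / (k + 1 : ℕ)) ^ (k + 1 : ℕ)) / 2 ≠ 0 := by
  set n : ℕ := k + 1 with hn
  have hn0 : (n : ℂ) ≠ 0 := Nat.cast_ne_zero.2 (by omega)
  have hnR : (0 : ℝ) < n := by exact_mod_cast Nat.pos_of_ne_zero (by omega)
  intro h0
  rw [_root_.div_eq_zero_iff] at h0
  have h0' : (1 + a * z / n) ^ n + (1 + b * z / n) ^ n = 0 := h0.resolve_right (by norm_num)
  have hs : ((n : ℂ) + a * z) ^ n + ((n : ℂ) + b * z) ^ n = 0 := by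
    have e1 : (n : ℂ) + a * z = (n : ℂ) * (1 + a * z / n) := by field_simp
    have e2 : (n : ℂ) + b * z = (n : ℂ) * (1 + b * z / n) := by field_simp
    rw [e1, e2, mul_pow, mul_pow, ← mul_add, h0', mul_zero]
  have h1 : ((n : ℂ) + a * z) ^ n = -(((n : ℂ) + b * z) ^ n) := by linear_combination hs
  set t : ℝ := (a - b).re with ht
  by_cases ht0 : t = 0
  · have hab : a = b := sub_eq_zero.1 (Complex.ext ht0 hIm)
    rw [hab] at h1
    have h2 : (2 : ℂ) * ((n : ℂ) + b * z) ^ n = 0 := by linear_combination h1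
    have h3 : ((n : ℂ) + b * z) ^ n = 0 := by
      rcases mul_eq_zero.1 h2 with h | h
      · norm_num at h
      · exact h
    have h4 : (n : ℂ) + b * z = 0 := pow_eq_zero_iff (by omega) |>.1 h3
    have hb0 : b ≠ 0 := by
      intro hb; rw [hb] at h4; simp at h4
    have h5 : z = -(n : ℂ) / b := by
      field_simp
      linear_combination h4
    have hbre : 0 ≤ b.re := by
      have h6 : (a + b).re = 2 * b.re := by rw [hab, Complex.add_re]; ring
      linarith [h6 ▸ hRe]
    have h6 : z.re ≤ 0 := by
      rw [h5, Complex.div_re]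
      have e1 : (-(n:ℂ)).re = -(n:ℝ) := by simp
      have e2 : (-(n:ℂ)).im = 0 := by simp
      rw [e1, e2]
      have h7 : 0 ≤ Complex.normSq b := Complex.normSq_nonneg b
      have h8 : -(n:ℝ) * b.re ≤ 0 := by nlinarith
      have h9 := div_nonpos_of_nonpos_of_nonneg h8 h7
      simp only [zero_mul, zero_div]
      linarith
    linarith
  · have habs2 : Complex.abs ((n : ℂ) + a * z) = Complex.abs ((n : ℂ) + b * z) := by
      have h2 := congrArg Complex.abs h1
      rw [map_neg_eq_map, map_pow, map_pow] at h2
      exact (pow_left_strictMonoOn₀ (n := n) (by omega)).injOn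
        (Set.mem_setOf.2 (Complex.abs.nonneg _)) (Set.mem_setOf.2 (Complex.abs.nonneg _)) h2
    have hns : Complex.normSq ((n : ℂ) + a * z) = Complex.normSq ((n : ℂ) + b * z) := by
      rw [← Complex.sq_abs, ← Complex.sq_abs, habs2]
    have him : a.im = b.im := by
      have h2 : (a - b).im = a.im - b.im := by simp
      rw [h2] at hIm; linarith
    have hare : a.re = b.re + t := by
      have h2 : (a - b).re = a.re - b.re := by simp
      rw [ht]; linarith [h2]
    have hE : Complex.normSq ((n : ℂ) + a * z) - Complex.normSq ((n : ℂ) + b * z)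
        = t * (2 * n * z.re + (a.re + b.re) * (z.re ^ 2 + z.im ^ 2)) := by
      simp only [Complex.normSq_apply, Complex.add_re, Complex.add_im, Complex.mul_re,
        Complex.mul_im, Complex.natCast_re, Complex.natCast_im, hare, him]
      ring
    have hpos : 0 < 2 * n * z.re + (a.re + b.re) * (z.re ^ 2 + z.im ^ 2) := by
      have h7 : 0 ≤ a.re + b.re := by
        have h8 : (a + b).re = a.re + b.re := by simp
        linarith [h8 ▸ hRe]
      nlinarith
    rw [hns] at hE
    have h9 : t * (2 * n * z.re + (a.re + b.re) * (z.re ^ 2 + z.im ^ 2)) = 0 := by linarith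
    exact ht0 ((mul_eq_zero.1 h9).resolve_right (ne_of_gt hpos))


lemma aux_nonvanish (a b : ℂ) (hIm : (a - b).im = 0) (z : ℂ) (hz : 0 < z.re) :
    (Complex.exp (a * z) + Complex.exp (b * z)) / 2 ≠ 0 := by
  intro h0
  have h1 : Complex.exp (a * z) = -Complex.exp (b * z) := by
    field_simp at h0
    rw [mul_comm z b] at h0
    linear_combination h0
  have h2 : Real.exp ((a * z).re) = Real.exp ((b * z).re) := by
    have := congrArg Complex.abs h1
    rwa [Complex.abs_exp, map_neg_eq_map, Complex.abs_exp] at this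
  have h3 : (a * z).re = (b * z).re := Real.exp_injective h2
  have h4 : (a - b).re * z.re = 0 := by
    have h5 : ((a - b) * z).re = 0 := by rw [sub_mul, Complex.sub_re]; linarith
    rw [Complex.mul_re, hIm] at h5
    linarith
  have h5 : (a - b).re = 0 := by
    rcases mul_eq_zero.1 h4 with h | h
    · exact h
    · linarith
  have hab : a = b := sub_eq_zero.1 (Complex.ext h5 hIm)
  rw [hab] at h1
  have h6 := Complex.exp_ne_zero (b * z)
  apply h6
  have h7 : (2:ℂ) * Complex.exp (b*z) = 0 := by linear_combination h1
  exact (mul_eq_zero.1 h7).resolve_left (by norm_num)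

lemma aux_im_zero (a b : ℂ) (μhat : ℂ → ℂ)
    (hμ : ∀ z, μhat z = (Complex.exp (a * z) + Complex.exp (b * z)) / 2)
    (h : ∀ z : ℂ, 0 < z.re → μhat z ≠ 0) : (a - b).im = 0 := by
  by_contra him
  set w : ℂ := a - b with hw
  have hw0 : w ≠ 0 := fun hc => him (by rw [hc]; simp)
  set s : ℝ := if 0 < w.im then 1 else -1 with hs
  have hsw : 0 < s * w.im := by
    rcases lt_trichotomy w.im 0 with h1 | h1 | h1
    · rw [hs, if_neg (by linarith)]; nlinarith
    · exact absurd h1 him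
    · rw [hs, if_pos h1]; nlinarith
  set z : ℂ := (s * Real.pi) * Complex.I / w with hz
  have hzre : 0 < z.re := by
    rw [hz, Complex.div_re]
    have h1 : ((s:ℂ) * (Real.pi:ℂ) * Complex.I).re = 0 := by simp
    have h2 : ((s:ℂ) * (Real.pi:ℂ) * Complex.I).im = s * Real.pi := by simp
    rw [h1, h2]
    have h3 : 0 < Complex.normSq w := Complex.normSq_pos.2 hw0
    rw [zero_mul, zero_div, zero_add]
    exact div_pos (by nlinarith [Real.pi_pos]) h3
  have hwz : w * z = (s : ℂ) * Real.pi * Complex.I := by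
    rw [hz]
    field_simp
  have hexp : Complex.exp (w * z) = -1 := by
    rw [hwz]
    rcases lt_or_ge 0 w.im with h1 | h1
    · rw [hs]; simp only [if_pos h1]; push_cast
      rw [one_mul, Complex.exp_pi_mul_I]
    · have h1' : ¬ (0 < w.im) := not_lt.2 h1
      rw [hs]; simp only [if_neg h1']; push_cast
      have h2 : (-1 : ℂ) * Real.pi * Complex.I = -(Real.pi * Complex.I) := by ring
      rw [h2, Complex.exp_neg, Complex.exp_pi_mul_I]
      norm_num
  have hμz : μhat z = 0 := by
    rw [hμ]
    have h1 : a * z = b * z + w * z := by rw [hw]; ring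
    rw [h1, Complex.exp_add, hexp]
    ring
  exact h z hzre hμz

/-- For `μ = (δ_a + δ_b)/2` with `a, b ∈ ℂ`:
`μ̂(z) = exp(((a+b)/2)z) cosh(((a-b)/2)z)`, and `μ̂` is nonvanishing on the open
right half-plane and a locally uniform limit of polynomials nonvanishing there
if and only if `a - b ∈ ℝ` and `Re(a+b) ≥ 0`. -/
theorem stmt_13 (a b : ℂ)
    (μhat : ℂ → ℂ) (hμ : ∀ z, μhat z = (Complex.exp (a * z) + Complex.exp (b * z)) / 2) :
    (∀ z : ℂ, μhat z = Complex.exp (((a + b) / 2) * z) * Complex.cosh (((a - b) / 2) * z)) ∧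
    (((∀ z : ℂ, 0 < z.re → μhat z ≠ 0) ∧ InLY μhat) ↔
      ((a - b).im = 0 ∧ 0 ≤ (a + b).re)) := by
  constructor
  · intro z
    have e1 : Complex.exp (((a+b)/2)*z) * Complex.exp (((a-b)/2)*z) = Complex.exp (a*z) := by
      rw [← Complex.exp_add]; congr 1; ring
    have e2 : Complex.exp (((a+b)/2)*z) * Complex.exp (-(((a-b)/2)*z)) = Complex.exp (b*z) := by
      rw [← Complex.exp_add]; congr 1; ring
    have hc : Complex.cosh (((a-b)/2)*z)
        = (Complex.exp (((a-b)/2)*z) + Complex.exp (-(((a-b)/2)*z))) / 2 := rfl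
    rw [hμ, hc]
    rw [← e1, ← e2]
    ring
  constructor
  · rintro ⟨hnz, P, hPnz, hPconv⟩
    have hIm : (a - b).im = 0 := aux_im_zero a b μhat hμ hnz
    refine ⟨hIm, ?_⟩
    have hconv' := tendstoLocallyUniformlyOn_univ.2 hPconv
    have h1 : Tendsto (fun k => Complex.abs ((P k).eval 1)) atTop
        (nhds (Complex.abs (μhat 1))) :=
      (Complex.continuous_abs.tendsto _).comp (hconv'.tendsto_at (Set.mem_univ 1))
    have h2 : Tendsto (fun k => Complex.abs ((P k).eval (-1))) atTop
        (nhds (Complex.abs (μhat (-1)))) :=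
      (Complex.continuous_abs.tendsto _).comp (hconv'.tendsto_at (Set.mem_univ (-1)))
    have hle : Complex.abs (μhat (-1)) ≤ Complex.abs (μhat 1) :=
      le_of_tendsto_of_tendsto' h2 h1 (fun k => aux_poly (P k) (hPnz k))
    have hfac : μhat (-1) = Complex.exp (-(a+b)) * μhat 1 := by
      rw [hμ, hμ]
      have e1 : Complex.exp (a * (-1)) = Complex.exp (-(a+b)) * Complex.exp (b*1) := by
        rw [← Complex.exp_add]; congr 1; ring
      have e2 : Complex.exp (b * (-1)) = Complex.exp (-(a+b)) * Complex.exp (a*1) := by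
        rw [← Complex.exp_add]; congr 1; ring
      rw [e1, e2]
      ring
    have hpos : 0 < Complex.abs (μhat 1) := by
      have h3 : (0:ℝ) < (1:ℂ).re := by simp
      exact Complex.abs.pos (hnz 1 h3)
    rw [hfac, map_mul, Complex.abs_exp] at hle
    have h4 : Real.exp ((-(a+b)).re) ≤ 1 := by
      by_contra hc
      push_neg at hc
      nlinarith
    have h5 := Real.exp_le_one_iff.1 h4
    rw [Complex.neg_re] at h5
    linarith
  · rintro ⟨hIm, hRe⟩
    constructor
    · intro z hz
      rw [hμ]
      exact aux_nonvanish a b hIm z hz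
    · refine ⟨fun k => Polynomial.C (2⁻¹:ℂ) *
        ((Polynomial.C (a/((k:ℂ)+1)) * Polynomial.X + 1)^(k+1) +
         (Polynomial.C (b/((k:ℂ)+1)) * Polynomial.X + 1)^(k+1)), ?_, ?_⟩
      all_goals
        have heval : ∀ (k : ℕ) (z : ℂ),
            (Polynomial.C (2⁻¹:ℂ) *
              ((Polynomial.C (a/((k:ℂ)+1)) * Polynomial.X + 1)^(k+1) +
               (Polynomial.C (b/((k:ℂ)+1)) * Polynomial.X + 1)^(k+1))).eval z
            = ((1 + a * z / (k + 1 : ℕ)) ^ (k + 1 : ℕ)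
               + (1 + b * z / (k + 1 : ℕ)) ^ (k + 1 : ℕ)) / 2 := by
          intro k z
          simp only [Polynomial.eval_mul, Polynomial.eval_add, Polynomial.eval_pow,
            Polynomial.eval_C, Polynomial.eval_X, Polynomial.eval_one]
          push_cast
          ring
      · intro k z hz
        rw [heval k z]
        exact aux_polynz a b hIm hRe k z hz
      · rw [tendstoLocallyUniformly_iff_forall_isCompact]
        intro K hK
        obtain ⟨R, hR⟩ := hK.isBounded.subset_closedBall 0
        have h := (aux_tuo2 a b R).mono hR
        refine (h.congr ?_).congr_right ?_
        · exact Eventually.of_forall (fun k z _ => (heval k z).symm)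
        · intro z _
          exact (hμ z).symm
end
end

section
/- Let α, γ ∈ (0,∞)^n and let g be an entire function on ℂ^n with M_α(g) := sup_z exp(−∑_j α_j|z_j|²/2)|g(z)| < ∞. Then the multiplication operator f ↦ g·f is a bounded linear operator from F_γ to F_{α+γ} with ‖g f‖²_{α+γ} ≤ ∏_{j=1}^n (1 + α_j/γ_j) · M_α(g)² · ‖f‖²_γ. -/
open scoped BigOperators
open Complex MeasureTheory

noncomputable section

/-- Let `g` be entire on `ℂⁿ` with
`M_α(g) = sup_z exp(-∑ α_j|z_j|²/2)|g(z)| < ∞`. Then multiplication by `g`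
is bounded from `F_γ` to `F_{α+γ}`:
`‖gf‖²_{α+γ} ≤ ∏(1+α_j/γ_j) · M_α(g)² · ‖f‖²_γ` (integral norms). -/
theorem stmt_17 {n : ℕ} (α γ : Fin n → ℝ) (hα : ∀ j, 0 < α j) (hγ : ∀ j, 0 < γ j)
    (g : (Fin n → ℂ) → ℂ) (hg : Differentiable ℂ g)
    (hM : BddAbove (Set.range fun z : Fin n → ℂ =>
      Real.exp (-∑ j, α j * ‖z j‖ ^ 2 / 2) * ‖g z‖))
    (f : (Fin n → ℂ) → ℂ) (hfe : Differentiable ℂ f) :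
    ∫⁻ z : Fin n → ℂ,
        ENNReal.ofReal (((∏ j, (α j + γ j)) / Real.pi ^ n) *
          (‖g z * f z‖ ^ 2 * Real.exp (-∑ j, (α j + γ j) * ‖z j‖ ^ 2))) ≤
      ENNReal.ofReal ((∏ j, (1 + α j / γ j)) *
          (sSup (Set.range fun z : Fin n → ℂ =>
            Real.exp (-∑ j, α j * ‖z j‖ ^ 2 / 2) * ‖g z‖)) ^ 2) *
        ∫⁻ z : Fin n → ℂ,
          ENNReal.ofReal (((∏ j, γ j) / Real.pi ^ n) *
            (‖f z‖ ^ 2 * Real.exp (-∑ j, γ j * ‖z j‖ ^ 2))) := by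
  set M : ℝ := sSup (Set.range fun z : Fin n → ℂ =>
      Real.exp (-∑ j, α j * ‖z j‖ ^ 2 / 2) * ‖g z‖) with hMdef
  have hM0 : 0 ≤ M := by
    have := le_csSup hM ⟨(0 : Fin n → ℂ), rfl⟩
    refine le_trans ?_ this
    positivity
  -- pointwise bound on ‖g‖²
  have hgb : ∀ z : Fin n → ℂ,
      ‖g z‖ ^ 2 * Real.exp (-∑ j, α j * ‖z j‖ ^ 2) ≤ M ^ 2 := by
    intro z
    have h1 : Real.exp (-∑ j, α j * ‖z j‖ ^ 2 / 2) * ‖g z‖ ≤ M :=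
      le_csSup hM ⟨z, rfl⟩
    have h2 : (Real.exp (-∑ j, α j * ‖z j‖ ^ 2 / 2) * ‖g z‖) ^ 2 ≤ M ^ 2 := by
      have hnn : 0 ≤ Real.exp (-∑ j, α j * ‖z j‖ ^ 2 / 2) * ‖g z‖ := by positivity
      exact pow_le_pow_left₀ hnn h1 2
    calc ‖g z‖ ^ 2 * Real.exp (-∑ j, α j * ‖z j‖ ^ 2)
        = (Real.exp (-∑ j, α j * ‖z j‖ ^ 2 / 2) * ‖g z‖) ^ 2 := by
          rw [mul_pow, ← Real.exp_nat_mul]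
          have : ((2 : ℕ) : ℝ) * (-∑ j, α j * ‖z j‖ ^ 2 / 2)
              = -∑ j, α j * ‖z j‖ ^ 2 := by
            rw [← Finset.sum_div]; push_cast; ring
          rw [this]; ring
      _ ≤ M ^ 2 := h2
  -- pointwise inequality of integrands
  have hpt : ∀ z : Fin n → ℂ,
      ENNReal.ofReal (((∏ j, (α j + γ j)) / Real.pi ^ n) *
          (‖g z * f z‖ ^ 2 * Real.exp (-∑ j, (α j + γ j) * ‖z j‖ ^ 2))) ≤
      ENNReal.ofReal ((∏ j, (1 + α j / γ j)) * M ^ 2) *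
        ENNReal.ofReal (((∏ j, γ j) / Real.pi ^ n) *
          (‖f z‖ ^ 2 * Real.exp (-∑ j, γ j * ‖z j‖ ^ 2))) := by
    intro z
    have hP : (0 : ℝ) ≤ ∏ j, (1 + α j / γ j) := by
      apply Finset.prod_nonneg; intro j _
      have := (hα j).le; have := (hγ j).le; positivity
    rw [← ENNReal.ofReal_mul (by positivity)]
    apply ENNReal.ofReal_le_ofReal
    have hprod : (∏ j, (α j + γ j)) = (∏ j, (1 + α j / γ j)) * ∏ j, γ j := by
      rw [← Finset.prod_mul_distrib]
      refine Finset.prod_congr rfl fun j _ => ?_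
      field_simp [(hγ j).ne']; ring
    have hexp : Real.exp (-∑ j, (α j + γ j) * ‖z j‖ ^ 2)
        = Real.exp (-∑ j, α j * ‖z j‖ ^ 2) * Real.exp (-∑ j, γ j * ‖z j‖ ^ 2) := by
      rw [← Real.exp_add, ← neg_add, ← Finset.sum_add_distrib]
      congr 1; simp only [add_mul]
    have hA : (0 : ℝ) < Real.exp (-∑ j, α j * ‖z j‖ ^ 2) := Real.exp_pos _
    have hB : (0 : ℝ) < Real.exp (-∑ j, γ j * ‖z j‖ ^ 2) := Real.exp_pos _
    have hpi : (0 : ℝ) < Real.pi ^ n := by positivity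
    have hG : (0 : ℝ) ≤ ∏ j, γ j := Finset.prod_nonneg fun j _ => (hγ j).le
    rw [hprod, hexp, norm_mul, mul_pow]
    have key : ‖g z‖ ^ 2 * ‖f z‖ ^ 2 *
        (Real.exp (-∑ j, α j * ‖z j‖ ^ 2) * Real.exp (-∑ j, γ j * ‖z j‖ ^ 2))
        ≤ M ^ 2 * (‖f z‖ ^ 2 * Real.exp (-∑ j, γ j * ‖z j‖ ^ 2)) := by
      have := hgb z
      have hf2 : (0 : ℝ) ≤ ‖f z‖ ^ 2 := by positivity
      nlinarith [mul_le_mul_of_nonneg_right this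
        (mul_nonneg hf2 hB.le)]
    calc (∏ j, (1 + α j / γ j)) * (∏ j, γ j) / Real.pi ^ n *
          (‖g z‖ ^ 2 * ‖f z‖ ^ 2 *
            (Real.exp (-∑ j, α j * ‖z j‖ ^ 2) * Real.exp (-∑ j, γ j * ‖z j‖ ^ 2)))
        ≤ (∏ j, (1 + α j / γ j)) * (∏ j, γ j) / Real.pi ^ n *
          (M ^ 2 * (‖f z‖ ^ 2 * Real.exp (-∑ j, γ j * ‖z j‖ ^ 2))) := by
          apply mul_le_mul_of_nonneg_left key; positivity
      _ = (∏ j, (1 + α j / γ j)) * M ^ 2 *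
          ((∏ j, γ j) / Real.pi ^ n *
            (‖f z‖ ^ 2 * Real.exp (-∑ j, γ j * ‖z j‖ ^ 2))) := by ring
  calc ∫⁻ z : Fin n → ℂ,
        ENNReal.ofReal (((∏ j, (α j + γ j)) / Real.pi ^ n) *
          (‖g z * f z‖ ^ 2 * Real.exp (-∑ j, (α j + γ j) * ‖z j‖ ^ 2)))
      ≤ ∫⁻ z : Fin n → ℂ,
        ENNReal.ofReal ((∏ j, (1 + α j / γ j)) * M ^ 2) *
          ENNReal.ofReal (((∏ j, γ j) / Real.pi ^ n) *
            (‖f z‖ ^ 2 * Real.exp (-∑ j, γ j * ‖z j‖ ^ 2))) :=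
        lintegral_mono hpt
    _ = ENNReal.ofReal ((∏ j, (1 + α j / γ j)) * M ^ 2) *
        ∫⁻ z : Fin n → ℂ,
          ENNReal.ofReal (((∏ j, γ j) / Real.pi ^ n) *
            (‖f z‖ ^ 2 * Real.exp (-∑ j, γ j * ‖z j‖ ^ 2))) :=
        lintegral_const_mul' _ _ ENNReal.ofReal_ne_top
end
end

section
/- For a, s, and complex z, w: 2a|z||w| ≤ (1/s)|w|² + a²s|z|² for all real a ≥ 0 and s > 0. Consequently, for a multiplier-sequence symbol G(z,w) = C z^n w^n e^{azw} ∏_{j<ω}(1 + x_j z w) with C ∈ ℝ, a ≥ 0, x_j > 0, ∑_j x_j < ∞, one has G ∈ F_{(β,γ)} (two-variable Bargmann–Fock space) for all β > a²s and γ > 1/s, for each s > 0. -/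
open Complex MeasureTheory Filter Finset Real Topology

noncomputable section

lemma aux_multipliable (x : ℕ → ℝ) (hxs : Summable x) (u : ℂ) :
    Multipliable (fun j => 1 + (x j : ℂ) * u) := by
  by_cases h : ∀ j, 1 + (x j : ℂ) * u ≠ 0
  · have hmaj : Summable (fun n => 3/2 * (|x n| * ‖u‖)) :=
      (hxs.abs.mul_right ‖u‖).mul_left (3/2)
    have hev : ∀ᶠ n in atTop, ‖(x n : ℂ) * u‖ ≤ 1/2 := by
      have h0 : Tendsto (fun n => |x n| * ‖u‖) atTop (𝓝 (|0| * ‖u‖)) :=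
        hxs.tendsto_atTop_zero.abs.mul_const ‖u‖
      rw [abs_zero, zero_mul] at h0
      filter_upwards [h0.eventually (eventually_le_nhds one_half_pos)] with n hn
      simpa [norm_mul] using hn
    have hlog : Summable fun n => Complex.log (1 + (x n : ℂ) * u) := by
      apply hmaj.of_norm_bounded_eventually_nat
      filter_upwards [hev] with n hn
      calc ‖Complex.log (1 + (x n : ℂ) * u)‖ ≤ 3/2 * ‖(x n : ℂ) * u‖ :=
            Complex.norm_log_one_add_half_le_self hn
        _ = 3/2 * (|x n| * ‖u‖) := by rw [norm_mul]; simp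
    exact Complex.multipliable_of_summable_log hlog
  · push_neg at h
    obtain ⟨j, hj⟩ := h
    refine ⟨0, ?_⟩
    have hev : (fun s => ∏ i ∈ s, (1 + (x i : ℂ) * u)) =ᶠ[(atTop : Filter (Finset ℕ))]
        (fun _ => (0:ℂ)) := by
      filter_upwards [eventually_ge_atTop {j}] with s hs
      exact Finset.prod_eq_zero (hs (Finset.mem_singleton_self j)) hj
    exact Tendsto.congr' hev.symm tendsto_const_nhds

lemma norm_tprod_le_exp {f : ℕ → ℂ} {y : ℕ → ℝ} (hf : Multipliable f)
    (hy : ∀ j, 0 ≤ y j) (hys : Summable y) (hb : ∀ j, ‖f j‖ ≤ 1 + y j) :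
    ‖∏' j, f j‖ ≤ Real.exp (∑' j, y j) := by
  have ht : Tendsto (fun n => ‖∏ j ∈ Finset.range n, f j‖) atTop (𝓝 ‖∏' j, f j‖) :=
    (continuous_norm.tendsto _).comp hf.hasProd.tendsto_prod_nat
  apply le_of_tendsto ht
  filter_upwards with n
  calc ‖∏ j ∈ Finset.range n, f j‖ ≤ ∏ j ∈ Finset.range n, ‖f j‖ :=
        Finset.norm_prod_le _ _
    _ ≤ ∏ j ∈ Finset.range n, Real.exp (y j) :=
        Finset.prod_le_prod (fun j _ => norm_nonneg _)
          (fun j _ => (hb j).trans (by linarith [Real.add_one_le_exp (y j)]))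
    _ = Real.exp (∑ j ∈ Finset.range n, y j) := (Real.exp_sum _ _).symm
    _ ≤ Real.exp (∑' j, y j) :=
        Real.exp_le_exp.mpr (Summable.sum_le_tsum _ (fun j _ => hy j) hys)

lemma gauss_lt_top {c : ℝ} (hc : 0 < c) :
    ∫⁻ z : ℂ, ENNReal.ofReal (Real.exp (-c * ‖z‖ ^ 2)) < ⊤ := by
  have h := GaussianFourier.integrable_cexp_neg_mul_sq_norm_add (V := ℂ)
    (b := (c : ℂ)) (by simpa using hc) 0 (0 : ℂ)
  have h2 := h.norm
  have heq : (fun v : ℂ => ‖cexp (-(c:ℂ) * ‖v‖^2 + 0 * (inner ℝ (0:ℂ) v : ℝ))‖)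
      = fun z : ℂ => Real.exp (-c * ‖z‖ ^ 2) := by
    ext v
    rw [Complex.norm_exp]
    simp [← Complex.ofReal_pow]
  rw [heq] at h2
  exact h2.lintegral_lt_top

set_option maxHeartbeats 1600000 in
/-- The elementary bound `2a|z||w| ≤ (1/s)|w|² + a²s|z|²` for `a ≥ 0`, `s > 0`;
consequently the multiplier-sequence symbol
`G(z,w) = C zⁿ wⁿ e^{azw} ∏_j (1 + x_j zw)` (with `C ∈ ℝ`, `a ≥ 0`, `x_j > 0`,
`∑ x_j < ∞`) lies in `F_{(β,γ)}` for all `β > a²s`, `γ > 1/s`, for each `s > 0`. -/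
theorem stmt_19 (C : ℝ) (a : ℝ) (ha : 0 ≤ a) (N : ℕ) (x : ℕ → ℝ)
    (hx : ∀ j, 0 < x j) (hxs : Summable x) :
    (∀ s : ℝ, 0 < s → ∀ z w : ℂ,
      2 * a * ‖z‖ * ‖w‖ ≤ (1 / s) * ‖w‖ ^ 2 + a ^ 2 * s * ‖z‖ ^ 2) ∧
    (∀ s : ℝ, 0 < s → ∀ β γ : ℝ, a ^ 2 * s < β → 1 / s < γ →
      ∫⁻ p : ℂ × ℂ,
        ENNReal.ofReal
          (‖(C : ℂ) * p.1 ^ N * p.2 ^ N * Complex.exp ((a : ℂ) * p.1 * p.2) *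
              ∏' j, (1 + (x j : ℂ) * p.1 * p.2)‖ ^ 2 *
            Real.exp (-β * ‖p.1‖ ^ 2 - γ * ‖p.2‖ ^ 2)) < ⊤) := by
  have part1 : ∀ s : ℝ, 0 < s → ∀ z w : ℂ,
      2 * a * ‖z‖ * ‖w‖ ≤ (1 / s) * ‖w‖ ^ 2 + a ^ 2 * s * ‖z‖ ^ 2 := by
    intro s hs z w
    have h : 2 * a * ‖z‖ * ‖w‖ - a ^ 2 * s * ‖z‖ ^ 2 ≤ ‖w‖ ^ 2 / s := by
      rw [le_div_iff₀ hs]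
      nlinarith [sq_nonneg (‖w‖ - a * s * ‖z‖)]
    have h2 : (1 / s) * ‖w‖ ^ 2 = ‖w‖ ^ 2 / s := by ring
    linarith
  refine ⟨part1, ?_⟩
  intro s hs β γ hβ hγ
  set c₁ := (β - a ^ 2 * s) / 4 with hc₁def
  set c₂ := (γ - 1 / s) / 4 with hc₂def
  have hc₁ : 0 < c₁ := by rw [hc₁def]; linarith
  have hc₂ : 0 < c₂ := by rw [hc₂def]; linarith
  obtain ⟨M, hM⟩ : ∃ M : ℕ, (∑' j, x (j + M)) < min c₁ c₂ := by
    have h0 : Tendsto (fun M : ℕ => ∑' j, x (j + M)) atTop (𝓝 0) := tendsto_sum_nat_add x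
    exact (h0.eventually (eventually_lt_nhds (lt_min hc₁ hc₂))).exists
  set T := ∑' j, x (j + M) with hTdef
  have hT0 : 0 ≤ T := tsum_nonneg fun j => (hx _).le
  have hTc₁ : T ≤ c₁ := le_of_lt (lt_of_lt_of_le hM (min_le_left _ _))
  have hTc₂ : T ≤ c₂ := le_of_lt (lt_of_lt_of_le hM (min_le_right _ _))
  set K := ∏ j ∈ Finset.range M, (1 + x j) with hKdef
  have hK0 : (0:ℝ) ≤ K := by
    rw [hKdef]
    exact Finset.prod_nonneg fun j _ => by linarith [hx j]
  set d := (N + M : ℝ) with hddef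
  have hd0 : (0:ℝ) ≤ d := by rw [hddef]; positivity
  set E := d ^ 2 / c₁ + d ^ 2 / c₂ with hEdef
  set A := C ^ 2 * K ^ 2 * Real.exp E with hAdef
  have hpt : ∀ z w : ℂ,
      ‖(C : ℂ) * z ^ N * w ^ N * Complex.exp ((a : ℂ) * z * w) *
          ∏' j, (1 + (x j : ℂ) * z * w)‖ ^ 2 *
        Real.exp (-β * ‖z‖ ^ 2 - γ * ‖w‖ ^ 2)
      ≤ A * (Real.exp (-c₁ * ‖z‖ ^ 2) * Real.exp (-c₂ * ‖w‖ ^ 2)) := by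
    intro z w
    have h1 := part1 s hs z w
    set r := ‖z‖ with hr
    set t := ‖w‖ with ht
    clear_value r t
    have hr0 : 0 ≤ r := by rw [hr]; exact norm_nonneg z
    have ht0 : 0 ≤ t := by rw [ht]; exact norm_nonneg w
    have hrt0 : 0 ≤ r * t := mul_nonneg hr0 ht0
    -- rewrite inner products
    have hzw : (fun j => 1 + (x j : ℂ) * z * w) = fun j => 1 + (x j : ℂ) * (z * w) := by
      funext j; ring
    -- norm bound on the symbol
    have hGnorm : ‖(C : ℂ) * z ^ N * w ^ N * Complex.exp ((a : ℂ) * z * w) *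
          ∏' j, (1 + (x j : ℂ) * z * w)‖
        ≤ |C| * K * Real.exp (d * r + d * t + (a + T) * (r * t)) := by
      have hmu : Multipliable (fun j => 1 + (x j : ℂ) * (z * w)) :=
        aux_multipliable x hxs (z * w)
      have hfac : ∀ j : ℕ, ‖1 + (x j : ℂ) * (z * w)‖ ≤ 1 + x j * (r * t) := by
        intro j
        calc ‖1 + (x j : ℂ) * (z * w)‖ ≤ ‖(1:ℂ)‖ + ‖(x j : ℂ) * (z * w)‖ := norm_add_le _ _
          _ = 1 + x j * (r * t) := by
              rw [norm_one, norm_mul, Complex.norm_real, Real.norm_eq_abs,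
                abs_of_pos (hx j), norm_mul, ← hr, ← ht]
      have hexpb : ‖Complex.exp ((a : ℂ) * z * w)‖ ≤ Real.exp (a * (r * t)) := by
        rw [Complex.norm_exp]
        apply Real.exp_le_exp.mpr
        calc ((a : ℂ) * z * w).re ≤ ‖(a : ℂ) * z * w‖ := Complex.re_le_norm _
          _ = a * (r * t) := by
              rw [norm_mul, norm_mul, Complex.norm_real, Real.norm_eq_abs, _root_.abs_of_nonneg ha,
                ← hr, ← ht]
              ring
      have hhead : ‖∏ j ∈ Finset.range M, (1 + (x j : ℂ) * (z * w))‖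
          ≤ K * ((1 + r) * (1 + t)) ^ M := by
        calc ‖∏ j ∈ Finset.range M, (1 + (x j : ℂ) * (z * w))‖
            ≤ ∏ j ∈ Finset.range M, ‖1 + (x j : ℂ) * (z * w)‖ := Finset.norm_prod_le _ _
          _ ≤ ∏ j ∈ Finset.range M, ((1 + x j) * ((1 + r) * (1 + t))) := by
              apply Finset.prod_le_prod (fun j _ => norm_nonneg _)
              intro j _
              refine (hfac j).trans ?_
              nlinarith [(hx j).le, hr0, ht0, hrt0, mul_nonneg (mul_nonneg (hx j).le hr0) ht0]
          _ = K * ((1 + r) * (1 + t)) ^ M := by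
              rw [Finset.prod_mul_distrib, Finset.prod_const, Finset.card_range, ← hKdef]
      have htail : ‖∏' j, (1 + (x (j + M) : ℂ) * (z * w))‖ ≤ Real.exp (T * (r * t)) := by
        have hmt : Multipliable (fun j => 1 + (x (j + M) : ℂ) * (z * w)) :=
          aux_multipliable (fun j => x (j + M)) ((summable_nat_add_iff (f := x) M).mpr hxs)
            (z * w)
        have hys : Summable (fun j => x (j + M) * (r * t)) :=
          (((summable_nat_add_iff (f := x) M)).mpr hxs).mul_right _
        have hb := norm_tprod_le_exp (f := fun j => 1 + (x (j + M) : ℂ) * (z * w))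
          (y := fun j => x (j + M) * (r * t)) hmt
          (fun j => mul_nonneg (hx _).le hrt0) hys (fun j => hfac (j + M))
        calc ‖∏' j, (1 + (x (j + M) : ℂ) * (z * w))‖
            ≤ Real.exp (∑' j, x (j + M) * (r * t)) := hb
          _ = Real.exp (T * (r * t)) := by rw [tsum_mul_right]
      have hsplit : (∏ j ∈ Finset.range M, (1 + (x j : ℂ) * (z * w))) *
          ∏' j, (1 + (x (j + M) : ℂ) * (z * w)) = ∏' j, (1 + (x j : ℂ) * (z * w)) := by
        have hmt : Multipliable (fun j => 1 + (x (j + M) : ℂ) * (z * w)) :=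
          aux_multipliable (fun j => x (j + M)) ((summable_nat_add_iff (f := x) M).mpr hxs)
            (z * w)
        exact Multipliable.prod_mul_tprod_nat_mul' (f := fun j => 1 + (x j : ℂ) * (z * w)) (k := M) hmt
      have hprod : ‖∏' j, (1 + (x j : ℂ) * (z * w))‖
          ≤ K * ((1 + r) * (1 + t)) ^ M * Real.exp (T * (r * t)) := by
        rw [← hsplit, norm_mul]
        exact mul_le_mul hhead htail (norm_nonneg _) (by positivity)
      -- put things together
      have hone_r : 1 + r ≤ Real.exp r := by linarith [Real.add_one_le_exp r]
      have hone_t : 1 + t ≤ Real.exp t := by linarith [Real.add_one_le_exp t]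
      have hp1 : (1 + r) ^ (N + M) ≤ Real.exp (d * r) := by
        calc (1 + r) ^ (N + M) ≤ (Real.exp r) ^ (N + M) :=
              pow_le_pow_left₀ (by linarith) hone_r _
          _ = Real.exp (d * r) := by
              rw [← Real.exp_nat_mul, hddef]; push_cast; ring_nf
      have hp2 : (1 + t) ^ (N + M) ≤ Real.exp (d * t) := by
        calc (1 + t) ^ (N + M) ≤ (Real.exp t) ^ (N + M) :=
              pow_le_pow_left₀ (by linarith) hone_t _
          _ = Real.exp (d * t) := by
              rw [← Real.exp_nat_mul, hddef]; push_cast; ring_nf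
      calc ‖(C : ℂ) * z ^ N * w ^ N * Complex.exp ((a : ℂ) * z * w) *
            ∏' j, (1 + (x j : ℂ) * z * w)‖
          = |C| * r ^ N * t ^ N * ‖Complex.exp ((a : ℂ) * z * w)‖ *
            ‖∏' j, (1 + (x j : ℂ) * (z * w))‖ := by
            rw [hzw]
            simp only [norm_mul, norm_pow, Complex.norm_real, Real.norm_eq_abs, ← hr, ← ht]
        _ ≤ |C| * (1 + r) ^ N * (1 + t) ^ N * Real.exp (a * (r * t)) *
            (K * ((1 + r) * (1 + t)) ^ M * Real.exp (T * (r * t))) := by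
            gcongr <;> first
              | exact abs_nonneg C
              | linarith
              | exact pow_le_pow_left₀ hr0 (by linarith) N
              | exact pow_le_pow_left₀ ht0 (by linarith) N
              | exact hexpb
              | exact hprod
        _ = |C| * K * ((1 + r) ^ (N + M) * (1 + t) ^ (N + M) *
            (Real.exp (a * (r * t)) * Real.exp (T * (r * t)))) := by
            rw [pow_add, pow_add, mul_pow]; ring
        _ ≤ |C| * K * (Real.exp (d * r) * Real.exp (d * t) *
            (Real.exp (a * (r * t)) * Real.exp (T * (r * t)))) := by
            gcongr
        _ = |C| * K * Real.exp (d * r + d * t + (a + T) * (r * t)) := by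
            rw [← Real.exp_add, ← Real.exp_add, ← Real.exp_add]; ring_nf
    -- exponent inequality
    have h2 : 2 * T * (r * t) ≤ c₁ * r ^ 2 + c₂ * t ^ 2 := by
      have h2a : 2 * T * (r * t) ≤ T * r ^ 2 + T * t ^ 2 := by
        nlinarith [mul_nonneg hT0 (sq_nonneg (r - t))]
      have h2b : T * r ^ 2 ≤ c₁ * r ^ 2 := mul_le_mul_of_nonneg_right hTc₁ (sq_nonneg r)
      have h2c : T * t ^ 2 ≤ c₂ * t ^ 2 := mul_le_mul_of_nonneg_right hTc₂ (sq_nonneg t)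
      linarith
    have h3 : 2 * (d * r) ≤ 2 * c₁ * r ^ 2 + d ^ 2 / c₁ := by
      have h3' : 2 * (d * r) - 2 * c₁ * r ^ 2 ≤ d ^ 2 / c₁ := by
        rw [le_div_iff₀ hc₁]
        nlinarith [sq_nonneg (c₁ * r - d), sq_nonneg (c₁ * r), hc₁]
      linarith
    have h4 : 2 * (d * t) ≤ 2 * c₂ * t ^ 2 + d ^ 2 / c₂ := by
      have h4' : 2 * (d * t) - 2 * c₂ * t ^ 2 ≤ d ^ 2 / c₂ := by
        rw [le_div_iff₀ hc₂]
        nlinarith [sq_nonneg (c₂ * t - d), sq_nonneg (c₂ * t), hc₂]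
      linarith
    have hβeq : β = a ^ 2 * s + 4 * c₁ := by rw [hc₁def]; ring
    have hγeq : γ = 1 / s + 4 * c₂ := by rw [hc₂def]; ring
    have hexpineq : 2 * (d * r + d * t + (a + T) * (r * t)) + (-β * r ^ 2 - γ * t ^ 2)
        ≤ E + (-c₁ * r ^ 2 + -c₂ * t ^ 2) := by
      rw [hEdef]
      nlinarith [h1, h2, h3, h4]
    -- final assembly
    have hG2 : ‖(C : ℂ) * z ^ N * w ^ N * Complex.exp ((a : ℂ) * z * w) *
          ∏' j, (1 + (x j : ℂ) * z * w)‖ ^ 2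
        ≤ (|C| * K * Real.exp (d * r + d * t + (a + T) * (r * t))) ^ 2 :=
      pow_le_pow_left₀ (norm_nonneg _) hGnorm 2
    have hsq : (|C| * K * Real.exp (d * r + d * t + (a + T) * (r * t))) ^ 2
        = C ^ 2 * K ^ 2 * Real.exp (2 * (d * r + d * t + (a + T) * (r * t))) := by
      rw [mul_pow, mul_pow, _root_.sq_abs, sq (Real.exp _), ← Real.exp_add]
      ring_nf
    calc ‖(C : ℂ) * z ^ N * w ^ N * Complex.exp ((a : ℂ) * z * w) *
          ∏' j, (1 + (x j : ℂ) * z * w)‖ ^ 2 * Real.exp (-β * r ^ 2 - γ * t ^ 2)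
        ≤ (C ^ 2 * K ^ 2 * Real.exp (2 * (d * r + d * t + (a + T) * (r * t)))) *
          Real.exp (-β * r ^ 2 - γ * t ^ 2) := by
          rw [← hsq]
          exact mul_le_mul_of_nonneg_right hG2 (Real.exp_pos _).le
      _ = C ^ 2 * K ^ 2 * Real.exp (2 * (d * r + d * t + (a + T) * (r * t)) +
          (-β * r ^ 2 - γ * t ^ 2)) := by rw [mul_assoc, ← Real.exp_add]
      _ ≤ C ^ 2 * K ^ 2 * Real.exp (E + (-c₁ * r ^ 2 + -c₂ * t ^ 2)) := by
          apply mul_le_mul_of_nonneg_left (Real.exp_le_exp.mpr hexpineq) (by positivity)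
      _ = A * (Real.exp (-c₁ * r ^ 2) * Real.exp (-c₂ * t ^ 2)) := by
          conv_rhs => rw [hAdef, mul_assoc, ← Real.exp_add, ← Real.exp_add]
  -- measurability
  have hm : ∀ c : ℝ, Measurable fun z : ℂ => ENNReal.ofReal (Real.exp (-c * ‖z‖ ^ 2)) :=
    fun c => (ENNReal.continuous_ofReal.comp (Real.continuous_exp.comp
      (continuous_const.mul (continuous_norm.pow 2)))).measurable
  have hA0 : (0:ℝ) ≤ A := by rw [hAdef]; positivity
  calc ∫⁻ p : ℂ × ℂ,
        ENNReal.ofReal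
          (‖(C : ℂ) * p.1 ^ N * p.2 ^ N * Complex.exp ((a : ℂ) * p.1 * p.2) *
              ∏' j, (1 + (x j : ℂ) * p.1 * p.2)‖ ^ 2 *
            Real.exp (-β * ‖p.1‖ ^ 2 - γ * ‖p.2‖ ^ 2))
      ≤ ∫⁻ p : ℂ × ℂ, ENNReal.ofReal A *
          (ENNReal.ofReal (Real.exp (-c₁ * ‖p.1‖ ^ 2)) *
           ENNReal.ofReal (Real.exp (-c₂ * ‖p.2‖ ^ 2))) := by
        apply lintegral_mono
        intro p
        exact le_trans (ENNReal.ofReal_le_ofReal (hpt p.1 p.2)) (le_of_eq (by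
          rw [ENNReal.ofReal_mul hA0, ENNReal.ofReal_mul (Real.exp_pos _).le]))
    _ = ENNReal.ofReal A *
          ((∫⁻ z : ℂ, ENNReal.ofReal (Real.exp (-c₁ * ‖z‖ ^ 2))) *
           (∫⁻ w : ℂ, ENNReal.ofReal (Real.exp (-c₂ * ‖w‖ ^ 2)))) := by
        rw [lintegral_const_mul' _ _ ENNReal.ofReal_ne_top]
        congr 1
        rw [Measure.volume_eq_prod, lintegral_prod_mul (hm c₁).aemeasurable (hm c₂).aemeasurable]
    _ < ⊤ := by
        apply ENNReal.mul_lt_top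
        · exact ENNReal.ofReal_lt_top
        · exact ENNReal.mul_lt_top (gauss_lt_top hc₁) (gauss_lt_top hc₂)
end
end
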